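/- Fix p∈(1,2), T>0, a>0, b>0, and let θ = p/(p−1), γ = (p−1)q/(p(1−q)) with 0<q<p/2, and α, β as in the paper. Let W(t,x) := (T−t)^α (a + b|x|^θ (T−t)^{θβ})^{−γ} and suppose ξ∈C²([0,∞)) satisfies ξ(0)=ξ'(0)=ξ''(0)=0, ξ''>0 on (0,∞), and |ξ'(r)|^{p−2}ξ''(r)→0 as r→0. If t₀∈(0,T) and W(t₀,0) − W(t₀,x) ≤ ξ(|x|) for all x in some ball B_δ(0), then a contradiction follows; i.e., no such ξ exists. -/

import Mathlib

open Real Filter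

theorem no_admissible_touching_at_origin (N : ℕ) (hN : 1 ≤ N)
    (p q T a b t₀ δ : ℝ)
    (hp : p ∈ Set.Ioo (1:ℝ) 2) (hq : q ∈ Set.Ioo (0:ℝ) (p / 2))
    (hT : 0 < T) (ha : 0 < a) (hb : 0 < b) (ht₀ : t₀ ∈ Set.Ioo (0:ℝ) T) (hδ : 0 < δ)
    (ξ : ℝ → ℝ) (hreg : ContDiff ℝ 2 ξ)
    (h0 : ξ 0 = 0) (h1 : deriv ξ 0 = 0) (h2 : deriv (deriv ξ) 0 = 0)
    (hpos : ∀ r : ℝ, 0 < r → 0 < deriv (deriv ξ) r)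
    (hlim : Tendsto (fun r => |deriv ξ r| ^ (p - 2) * deriv (deriv ξ) r)
      (nhdsWithin 0 (Set.Ioi 0)) (nhds 0))
    (W : ℝ → EuclideanSpace ℝ (Fin N) → ℝ)
    (hW : ∀ t x, W t x = (T - t) ^ ((p - q) / (p - 2*q))
        * (a + b * ‖x‖ ^ (p / (p - 1))
            * (T - t) ^ ((p / (p - 1)) * ((q - p + 1) / (p - 2*q))))
          ^ (-((p - 1) * q / (p * (1 - q)))))
    (htouch : ∀ x : EuclideanSpace ℝ (Fin N), ‖x‖ < δ → W t₀ 0 - W t₀ x ≤ ξ ‖x‖) :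
    False := by
  obtain ⟨hp1, hp2⟩ := hp
  obtain ⟨hq0, hq2⟩ := hq
  obtain ⟨ht1, ht2⟩ := ht₀
  have hp1' : 0 < p - 1 := by linarith
  have hq1 : q < 1 := by linarith
  set θ : ℝ := p / (p - 1) with hθdef
  have hθpos : 0 < θ := div_pos (by linarith) hp1'
  set γ : ℝ := (p - 1) * q / (p * (1 - q)) with hγdef
  have hγpos : 0 < γ :=
    div_pos (mul_pos hp1' hq0) (mul_pos (by linarith) (by linarith))
  have hTt : 0 < T - t₀ := by linarith
  set A : ℝ := (T - t₀) ^ ((p - q) / (p - 2*q)) with hA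
  set s : ℝ := (T - t₀) ^ (θ * ((q - p + 1) / (p - 2*q))) with hs
  have hApos : 0 < A := Real.rpow_pos_of_pos hTt _
  have hspos : 0 < s := Real.rpow_pos_of_pos hTt _
  -- regularity consequences
  have hdiff1 : Differentiable ℝ ξ := hreg.differentiable (by norm_num)
  have hregs : ContDiff ℝ ((1:ℕ∞)+1) ξ := by exact_mod_cast hreg
  rw [contDiff_succ_iff_deriv] at hregs
  have hregs2 := hregs.2.2
  rw [show ((1:ℕ∞):WithTop ℕ∞) = 0 + 1 by rfl, contDiff_succ_iff_deriv] at hregs2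
  have hdiff2 : Differentiable ℝ (deriv ξ) := hregs2.1
  -- deriv ξ is strictly monotone on [0,∞), positive on (0,∞)
  have hmono : StrictMonoOn (deriv ξ) (Set.Ici 0) := by
    apply strictMonoOn_of_deriv_pos (convex_Ici 0) hdiff2.continuous.continuousOn
    intro x hx
    rw [interior_Ici] at hx
    exact hpos x hx
  have hξ'pos : ∀ r : ℝ, 0 < r → 0 < deriv ξ r := by
    intro r hr
    have := hmono (Set.mem_Ici.mpr le_rfl) (le_of_lt hr : (0:ℝ) ≤ r) hr
    rwa [h1] at this
  -- the constant c0
  set c0 : ℝ := A * γ * (2*a) ^ (-γ - 1) * (b * s) with hc0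
  have hc0pos : 0 < c0 :=
    mul_pos (mul_pos (mul_pos hApos hγpos) (Real.rpow_pos_of_pos (by linarith) _))
      (mul_pos hb hspos)
  set ε' : ℝ := c0 ^ (p - 1) / (p - 1) with hε'
  have hε'pos : 0 < ε' := div_pos (Real.rpow_pos_of_pos hc0pos _) hp1'
  rw [Metric.tendsto_nhdsWithin_nhds] at hlim
  obtain ⟨δ₁, hδ₁pos, hδ₁⟩ := hlim ε' hε'pos
  -- choice of r
  set r₂ : ℝ := (a / (b * s)) ^ θ⁻¹ with hr₂
  have hr₂pos : 0 < r₂ := Real.rpow_pos_of_pos (div_pos ha (mul_pos hb hspos)) _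
  have hm : 0 < min δ₁ (min δ r₂) := lt_min hδ₁pos (lt_min hδ hr₂pos)
  set r : ℝ := min δ₁ (min δ r₂) / 2 with hrdef
  have hr : 0 < r := half_pos hm
  have hrδ₁ : r < δ₁ := lt_of_lt_of_le (half_lt_self hm) (min_le_left _ _)
  have hrδ : r < δ :=
    lt_of_lt_of_le (half_lt_self hm) (le_trans (min_le_right _ _) (min_le_left _ _))
  have hrr₂ : r ≤ r₂ :=
    le_trans (le_of_lt (half_lt_self hm)) (le_trans (min_le_right _ _) (min_le_right _ _))
  -- u ≤ a
  set u : ℝ := b * r ^ θ * s with hu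
  have hupos : 0 < u := mul_pos (mul_pos hb (Real.rpow_pos_of_pos hr _)) hspos
  have hr₂θ : r₂ ^ θ = a / (b * s) := by
    rw [hr₂, ← Real.rpow_mul (le_of_lt (div_pos ha (mul_pos hb hspos))),
      inv_mul_cancel₀ (ne_of_gt hθpos), Real.rpow_one]
  have hua : u ≤ a := by
    have h1' : r ^ θ ≤ a / (b * s) := by
      rw [← hr₂θ]
      exact Real.rpow_le_rpow (le_of_lt hr) hrr₂ (le_of_lt hθpos)
    have := mul_le_mul_of_nonneg_left h1' (le_of_lt (mul_pos hb hspos))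
    calc u = (b * s) * r ^ θ := by ring
      _ ≤ (b * s) * (a / (b * s)) := this
      _ = a := by field_simp
  -- MVT for y ↦ y^(-γ) on [a, a+u]
  have hmvtW := exists_hasDerivAt_eq_slope (fun y : ℝ => y ^ (-γ))
      (fun y : ℝ => (-γ) * y ^ (-γ - 1)) (lt_add_of_pos_right a hupos)
      (fun y hy => by
        exact (Real.continuousAt_rpow_const y (-γ)
          (Or.inl (ne_of_gt (lt_of_lt_of_le ha hy.1)))).continuousWithinAt)
      (fun y hy => Real.hasDerivAt_rpow_const (Or.inl (ne_of_gt (lt_trans ha hy.1))))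
  obtain ⟨c, hcmem, hceq⟩ := hmvtW
  have hcpos : 0 < c := lt_trans ha hcmem.1
  have hkey : a ^ (-γ) - (a + u) ^ (-γ) = γ * c ^ (-γ - 1) * u := by
    have hceq' : (-γ) * c ^ (-γ - 1) = ((a + u) ^ (-γ) - a ^ (-γ)) / (a + u - a) := hceq
    have h' : (-γ) * c ^ (-γ - 1) * u = (a + u) ^ (-γ) - a ^ (-γ) := by
      rw [hceq', show a + u - a = u by ring, div_mul_cancel₀ _ (ne_of_gt hupos)]
    linear_combination h'
  have hbound : (2*a) ^ (-γ - 1) ≤ c ^ (-γ - 1) := by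
    apply Real.rpow_le_rpow_of_nonpos hcpos _ (by linarith)
    have : c < a + u := hcmem.2
    linarith
  -- the test point x
  have hN0 : 0 < N := hN
  set x : EuclideanSpace ℝ (Fin N) := EuclideanSpace.single (⟨0, hN0⟩ : Fin N) r with hx
  have hnx : ‖x‖ = r := by
    rw [hx, EuclideanSpace.norm_single]
    exact abs_of_pos hr
  have hW0 : W t₀ 0 = A * a ^ (-γ) := by
    rw [hW]
    simp [Real.zero_rpow (ne_of_gt hθpos)]
    exact Or.inl rfl
  have hWx : W t₀ x = A * (a + u) ^ (-γ) := by
    rw [hW, hnx]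
  have hlower : c0 * r ^ θ ≤ W t₀ 0 - W t₀ x := by
    have step : γ * (2*a) ^ (-γ - 1) * u ≤ γ * c ^ (-γ - 1) * u := by
      have := mul_le_mul_of_nonneg_right hbound (le_of_lt hupos)
      have := mul_le_mul_of_nonneg_left this (le_of_lt hγpos)
      linarith [this]
    have step2 : A * (γ * (2*a) ^ (-γ - 1) * u) ≤ A * (γ * c ^ (-γ - 1) * u) :=
      mul_le_mul_of_nonneg_left step (le_of_lt hApos)
    calc c0 * r ^ θ = A * (γ * (2*a) ^ (-γ - 1) * u) := by rw [hc0, hu]; ring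
      _ ≤ A * (γ * c ^ (-γ - 1) * u) := step2
      _ = A * (a ^ (-γ) - (a + u) ^ (-γ)) := by rw [hkey]
      _ = W t₀ 0 - W t₀ x := by rw [hW0, hWx]; ring
  -- upper bound for ξ r
  set g : ℝ → ℝ := fun t => (deriv ξ t) ^ (p - 1) with hg
  have hg0 : g 0 = 0 := by
    show (deriv ξ 0) ^ (p - 1) = 0
    rw [h1, Real.zero_rpow (ne_of_gt hp1')]
  have hgcont : ContinuousOn g (Set.Icc 0 r) := by
    intro t _
    exact ((Real.continuousAt_rpow_const (deriv ξ t) (p - 1)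
      (Or.inr (le_of_lt hp1'))).comp (hdiff2.continuous.continuousAt)).continuousWithinAt
  have hgderiv : ∀ t ∈ Set.Ioo (0:ℝ) r,
      HasDerivAt g ((p - 1) * (deriv ξ t) ^ (p - 2) * deriv (deriv ξ) t) t := by
    intro t ht
    have hd : HasDerivAt (deriv ξ) (deriv (deriv ξ) t) t := (hdiff2 t).hasDerivAt
    have hc : HasDerivAt (fun y : ℝ => y ^ (p - 1))
        ((p - 1) * (deriv ξ t) ^ (p - 1 - 1)) (deriv ξ t) :=
      Real.hasDerivAt_rpow_const (Or.inl (ne_of_gt (hξ'pos t ht.1)))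
    have := hc.comp t hd
    have e : p - 1 - 1 = p - 2 := by ring
    rw [e] at this
    exact this
  obtain ⟨c₁, hc₁mem, hc₁eq⟩ :=
    exists_hasDerivAt_eq_slope g _ hr hgcont hgderiv
  have hc₁lt : (p - 1) * (deriv ξ c₁) ^ (p - 2) * deriv (deriv ξ) c₁ < (p - 1) * ε' := by
    have hmem : c₁ ∈ Set.Ioi (0:ℝ) := hc₁mem.1
    have hdist : dist c₁ 0 < δ₁ := by
      rw [Real.dist_eq, sub_zero, abs_of_pos hc₁mem.1]
      exact lt_trans hc₁mem.2 hrδ₁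
    have := hδ₁ hmem hdist
    rw [Real.dist_eq, sub_zero] at this
    have h3 : |deriv ξ c₁| ^ (p - 2) * deriv (deriv ξ) c₁ < ε' :=
      lt_of_le_of_lt (le_abs_self _) this
    rw [abs_of_pos (hξ'pos c₁ hc₁mem.1)] at h3
    have := mul_lt_mul_of_pos_left h3 hp1'
    linarith [this]
  have hgr : g r < c0 ^ (p - 1) * r := by
    have : (g r - g 0) / (r - 0) < (p - 1) * ε' := by rw [← hc₁eq]; exact hc₁lt
    rw [hg0, sub_zero, sub_zero, div_lt_iff₀ hr] at this
    have he : (p - 1) * ε' = c0 ^ (p - 1) := by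
      rw [hε']; field_simp
    calc g r < (p - 1) * ε' * r := this
      _ = c0 ^ (p - 1) * r := by rw [he]
  have hgrpos : 0 ≤ g r := Real.rpow_nonneg (le_of_lt (hξ'pos r hr)) _
  have hξ'r : deriv ξ r < c0 * r ^ (p - 1)⁻¹ := by
    have hlt : (g r) ^ (p - 1)⁻¹ < (c0 ^ (p - 1) * r) ^ (p - 1)⁻¹ :=
      Real.rpow_lt_rpow hgrpos hgr (inv_pos.mpr hp1')
    have hId : (g r) ^ (p - 1)⁻¹ = deriv ξ r := by
      show ((deriv ξ r) ^ (p - 1)) ^ (p - 1)⁻¹ = deriv ξ r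
      rw [← Real.rpow_mul (le_of_lt (hξ'pos r hr)),
        mul_inv_cancel₀ (ne_of_gt hp1'), Real.rpow_one]
    have hrhs : (c0 ^ (p - 1) * r) ^ (p - 1)⁻¹ = c0 * r ^ (p - 1)⁻¹ := by
      rw [Real.mul_rpow (le_of_lt (Real.rpow_pos_of_pos hc0pos _)) (le_of_lt hr),
        ← Real.rpow_mul (le_of_lt hc0pos), mul_inv_cancel₀ (ne_of_gt hp1'), Real.rpow_one]
    rw [hId, hrhs] at hlt
    exact hlt
  -- ξ r ≤ r * deriv ξ r
  obtain ⟨d, hdmem, hdeq⟩ := exists_hasDerivAt_eq_slope ξ (deriv ξ) hr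
    hreg.continuous.continuousOn (fun t _ => (hdiff1 t).hasDerivAt)
  have hξr : ξ r ≤ deriv ξ r * r := by
    have : deriv ξ d = ξ r / r := by rw [hdeq, h0, sub_zero, sub_zero]
    have hdr : deriv ξ d ≤ deriv ξ r :=
      le_of_lt (hmono (le_of_lt hdmem.1) (le_of_lt hr) hdmem.2)
    rw [this] at hdr
    calc ξ r = (ξ r / r) * r := by field_simp
      _ ≤ deriv ξ r * r := mul_le_mul_of_nonneg_right hdr (le_of_lt hr)
  have hupper : ξ r < c0 * r ^ θ := by
    have hfin : deriv ξ r * r < c0 * r ^ θ := by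
      have := mul_lt_mul_of_pos_right hξ'r hr
      have hrθ : r ^ (p - 1)⁻¹ * r = r ^ θ := by
        rw [hθdef]
        nth_rewrite 2 [show r = r ^ (1:ℝ) by rw [Real.rpow_one]]
        rw [← Real.rpow_add hr]
        congr 1
        field_simp
        ring
      calc deriv ξ r * r < c0 * r ^ (p - 1)⁻¹ * r := this
        _ = c0 * (r ^ (p - 1)⁻¹ * r) := by ring
        _ = c0 * r ^ θ := by rw [hrθ]
    linarith [hξr]
  -- contradiction
  have := htouch x (by rw [hnx]; exact hrδ)
  rw [hnx] at this
  linarith [hlower, hupper, this]
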